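/- Suppose functions e_i(ε) and E_{ii}(ε) on (0, ε₀] satisfy 0 < e_i(ε) ≤ E_{ii}(ε), e_i admits a pivotal Laurent (m⁻, m⁺)-expansion with leading coefficient b[m⁻] > 0, and E_{ii} admits a pivotal Laurent (M⁻, M⁺)-expansion with leading coefficient B[M⁻] ≠ 0. Then M⁻ ≤ m⁻, and hence the quotient π_i(ε) = e_i(ε)/E_{ii}(ε) admits a pivotal Laurent (n⁻, n⁺)-expansion with n⁻ = m⁻ − M⁻ ≥ 0 and positive leading coefficient c[n⁻] = b[m⁻]/B[M⁻] > 0. -/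

import Mathlib

open Filter Topology

/-- A Laurent `(h,k)`-asymptotic expansion of `A` on `(0, ε₀]`:
`A(ε) = Σ_{l=h}^{k} a l ε^l + o ε` with `o ε / ε^k → 0` as `ε → 0+`. -/
def IsLaurentExpansion (ε0 : ℝ) (A : ℝ → ℝ) (h k : ℤ) (a : ℤ → ℝ) (o : ℝ → ℝ) : Prop :=
  (∀ ε ∈ Set.Ioc (0:ℝ) ε0, A ε = (∑ l ∈ Finset.Icc h k, a l * ε ^ l) + o ε) ∧
  Filter.Tendsto (fun ε => o ε / ε ^ k) (nhdsWithin 0 (Set.Ioi 0)) (nhds 0)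


lemma sum_Icc_zpow_eq (h k : ℤ) (hhk : h ≤ k) (a : ℤ → ℝ) (ε : ℝ) (hε : ε ≠ 0) :
    ∑ l ∈ Finset.Icc h k, a l * ε ^ l
      = ε ^ h * ∑ j ∈ Finset.range ((k - h).toNat + 1), a (h + (j:ℤ)) * ε ^ j := by
  rw [Finset.mul_sum]
  refine Finset.sum_nbij' (fun l => (l - h).toNat) (fun j => h + (j:ℤ)) ?_ ?_ ?_ ?_ ?_
  · intro l hl; simp only [Finset.mem_Icc] at hl; simp only [Finset.mem_range]; omega
  · intro j hj; simp only [Finset.mem_range] at hj; simp only [Finset.mem_Icc]; omega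
  · intro l hl; simp only [Finset.mem_Icc] at hl; beta_reduce; omega
  · intro j hj; beta_reduce; omega
  · intro l hl
    simp only [Finset.mem_Icc] at hl
    have h1 : ((l - h).toNat : ℤ) = l - h := Int.toNat_of_nonneg (by omega)
    rw [← zpow_natCast ε ((l - h).toNat), h1,
      show ε ^ h * (a (h + (l - h)) * ε ^ (l - h)) = a (h + (l - h)) * (ε ^ h * ε ^ (l - h)) by
        ring, ← zpow_add₀ hε, show h + (l - h) = l by ring]

lemma div_zpow_div_pow (A x : ℝ) (hx : x ≠ 0) (m : ℤ) (d : ℕ) :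
    (A / x ^ m) / x ^ d = A / x ^ (m + d) := by
  rw [div_div, ← zpow_natCast x d, ← zpow_add₀ hx]

lemma div_pow_shift (A x : ℝ) (hx : x ≠ 0) {N d : ℕ} (h : N ≤ d) :
    (A / x ^ d) * x ^ (d - N) = A / x ^ N := by
  have h2 : x ^ d = x ^ N * x ^ (d - N) := by rw [← pow_add]; congr 1; omega
  rw [h2, ← div_div, div_mul_cancel₀ _ (pow_ne_zero _ hx)]

lemma quot_err (Pv Qv pv qv rbv rBv t : ℝ) (hP : Pv = pv + rbv) (hQ : Qv = qv + rBv)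
    (hQ0 : Qv ≠ 0) (hq0 : qv ≠ 0) (ht : t ≠ 0) :
    (Pv / Qv - pv / qv) / t = ((rbv / t) * qv - pv * (rBv / t)) / (Qv * qv) := by
  subst hP; subst hQ; field_simp; ring

lemma quot_scale (a c x : ℝ) (hx : x ≠ 0) (hc : c ≠ 0) (m M : ℤ) :
    a / c = ((a / x ^ m) / (c / x ^ M)) * x ^ (m - M) := by
  rw [zpow_sub₀ hx]
  field_simp

lemma scale_back (Eε x : ℝ) (hx : x ≠ 0) (M m : ℤ) :
    (Eε / x ^ M) * x ^ (M - m) = Eε / x ^ m := by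
  rw [zpow_sub₀ hx, div_mul_div_comm, mul_comm Eε (x ^ M),
    mul_div_mul_left _ _ (zpow_ne_zero M hx)]

/-- if `0 < e i (ε) ≤ E ii (ε)`, `e i` has a pivotal Laurent
`(m⁻, m⁺)`-expansion with positive leading coefficient and `E ii` has a pivotal Laurent
`(M⁻, M⁺)`-expansion, then `M⁻ ≤ m⁻`, and the stationary probability
`π i (ε) = e i (ε) / E ii (ε)` has a pivotal Laurent `(n⁻, n⁺)`-expansion with
`n⁻ = m⁻ - M⁻ ≥ 0`, `n⁺ = min (m⁺ - M⁻) (M⁺ - 2M⁻ + m⁻)` and positive leading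
coefficient `b m⁻ / B M⁻`. -/
theorem stationary_prob_quotient_expansion (ε0 : ℝ) (hε0 : 0 < ε0) (hε1 : ε0 ≤ 1)
    (e E : ℝ → ℝ) (mLo mHi MLo MHi : ℤ) (hm : mLo ≤ mHi) (hM : MLo ≤ MHi)
    (b B : ℤ → ℝ) (ob oB : ℝ → ℝ)
    (He : IsLaurentExpansion ε0 e mLo mHi b ob) (hbpos : 0 < b mLo)
    (HE : IsLaurentExpansion ε0 E MLo MHi B oB) (hBpiv : B MLo ≠ 0)
    (hord : ∀ ε ∈ Set.Ioc (0:ℝ) ε0, 0 < e ε ∧ e ε ≤ E ε) :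
    MLo ≤ mLo ∧ 0 ≤ mLo - MLo ∧
    ∃ (c : ℤ → ℝ) (oc : ℝ → ℝ),
      IsLaurentExpansion ε0 (fun ε => e ε / E ε) (mLo - MLo)
        (min (mHi - MLo) (MHi - 2 * MLo + mLo)) c oc ∧
      c (mLo - MLo) = b mLo / B MLo ∧ 0 < c (mLo - MLo) := by
  classical
  obtain ⟨heq, hob⟩ := He
  obtain ⟨hEq, hoB⟩ := HE
  set F : Filter ℝ := nhdsWithin 0 (Set.Ioi 0) with hFdef
  have hIoc : ∀ᶠ ε in F, ε ∈ Set.Ioc (0:ℝ) ε0 := Ioc_mem_nhdsGT hε0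
  have hpos : ∀ᶠ ε in F, (0:ℝ) < ε := hIoc.mono fun ε hε => hε.1
  set db := (mHi - mLo).toNat with hdbdef
  set dB := (MHi - MLo).toNat with hdBdef
  have hdb' : (db : ℤ) = mHi - mLo := Int.toNat_of_nonneg (by omega)
  have hdB' : (dB : ℤ) = MHi - MLo := Int.toNat_of_nonneg (by omega)
  set p : ℝ → ℝ := fun x => ∑ j ∈ Finset.range (db + 1), b (mLo + (j:ℤ)) * x ^ j with hpdef
  set q : ℝ → ℝ := fun x => ∑ j ∈ Finset.range (dB + 1), B (MLo + (j:ℤ)) * x ^ j with hqdef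
  have hp0 : p 0 = b mLo := by
    rw [hpdef]; simp only; rw [Finset.sum_range_succ']
    simp [pow_succ]
  have hq0 : q 0 = B MLo := by
    rw [hqdef]; simp only; rw [Finset.sum_range_succ']
    simp [pow_succ]
  have hpc : Continuous p := continuous_finset_sum _ fun j _ =>
    continuous_const.mul (continuous_pow j)
  have hqc : Continuous q := continuous_finset_sum _ fun j _ =>
    continuous_const.mul (continuous_pow j)
  have hplim : Tendsto p F (nhds (b mLo)) := by
    rw [← hp0]; exact (hpc.tendsto 0).mono_left nhdsWithin_le_nhds
  have hqlim : Tendsto q F (nhds (B MLo)) := by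
    rw [← hq0]; exact (hqc.tendsto 0).mono_left nhdsWithin_le_nhds
  set Pf : ℝ → ℝ := fun ε => e ε / ε ^ mLo with hPfdef
  set Qf : ℝ → ℝ := fun ε => E ε / ε ^ MLo with hQfdef
  set rb : ℝ → ℝ := fun ε => ob ε / ε ^ mLo with hrbdef
  set rB : ℝ → ℝ := fun ε => oB ε / ε ^ MLo with hrBdef
  have hPe : ∀ ε ∈ Set.Ioc (0:ℝ) ε0, Pf ε = p ε + rb ε := by
    intro ε hε
    have hεne : ε ≠ 0 := ne_of_gt hε.1
    have h1 := heq ε hε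
    rw [hPfdef]; simp only
    rw [h1, add_div, sum_Icc_zpow_eq mLo mHi hm b ε hεne,
      mul_div_cancel_left₀ _ (zpow_ne_zero mLo hεne)]
  have hQe : ∀ ε ∈ Set.Ioc (0:ℝ) ε0, Qf ε = q ε + rB ε := by
    intro ε hε
    have hεne : ε ≠ 0 := ne_of_gt hε.1
    have h1 := hEq ε hε
    rw [hQfdef]; simp only
    rw [h1, add_div, sum_Icc_zpow_eq MLo MHi hM B ε hεne,
      mul_div_cancel_left₀ _ (zpow_ne_zero MLo hεne)]
  have hPeF : ∀ᶠ ε in F, Pf ε = p ε + rb ε := hIoc.mono fun ε hε => hPe ε hε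
  have hQeF : ∀ᶠ ε in F, Qf ε = q ε + rB ε := hIoc.mono fun ε hε => hQe ε hε
  -- remainder limits
  have hrbN : Tendsto (fun ε => rb ε / ε ^ db) F (nhds 0) := by
    refine hob.congr' (hpos.mono fun ε hε => ?_)
    rw [hrbdef]; simp only
    rw [div_zpow_div_pow _ _ (ne_of_gt hε), show mLo + (db:ℤ) = mHi by omega]
  have hrBN : Tendsto (fun ε => rB ε / ε ^ dB) F (nhds 0) := by
    refine hoB.congr' (hpos.mono fun ε hε => ?_)
    rw [hrBdef]; simp only
    rw [div_zpow_div_pow _ _ (ne_of_gt hε), show MLo + (dB:ℤ) = MHi by omega]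
  have hpowlim : ∀ n : ℕ, Tendsto (fun ε : ℝ => ε ^ n) F (nhds ((0:ℝ) ^ n)) :=
    fun n => ((continuous_pow n).tendsto 0).mono_left nhdsWithin_le_nhds
  have hrb0 : Tendsto rb F (nhds 0) := by
    have h1 := hrbN.mul (hpowlim db)
    rw [zero_mul] at h1
    refine h1.congr' (hpos.mono fun ε hε => ?_)
    exact div_mul_cancel₀ _ (pow_ne_zero _ (ne_of_gt hε))
  have hrB0 : Tendsto rB F (nhds 0) := by
    have h1 := hrBN.mul (hpowlim dB)
    rw [zero_mul] at h1
    refine h1.congr' (hpos.mono fun ε hε => ?_)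
    exact div_mul_cancel₀ _ (pow_ne_zero _ (ne_of_gt hε))
  have hPlim : Tendsto Pf F (nhds (b mLo)) := by
    have h1 := hplim.add hrb0
    rw [add_zero] at h1
    exact h1.congr' (hPeF.mono fun ε hε => hε.symm)
  have hQlim : Tendsto Qf F (nhds (B MLo)) := by
    have h1 := hqlim.add hrB0
    rw [add_zero] at h1
    exact h1.congr' (hQeF.mono fun ε hε => hε.symm)
  have hE0 : ∀ ε ∈ Set.Ioc (0:ℝ) ε0, 0 < E ε := fun ε hε =>
    lt_of_lt_of_le (hord ε hε).1 (hord ε hε).2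
  have hQposF : ∀ᶠ ε in F, 0 < Qf ε := hIoc.mono fun ε hε =>
    div_pos (hE0 ε hε) (zpow_pos hε.1 _)
  have hBpos : 0 < B MLo := by
    have h1 : 0 ≤ B MLo := ge_of_tendsto hQlim (hQposF.mono fun ε hε => le_of_lt hε)
    exact lt_of_le_of_ne h1 (Ne.symm hBpiv)
  have hMm : MLo ≤ mLo := by
    by_contra hcon
    push_neg at hcon
    have hd : (1:ℕ) ≤ (MLo - mLo).toNat := by omega
    have hle : ∀ᶠ ε in F, Pf ε ≤ Qf ε * ε ^ (MLo - mLo).toNat := by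
      refine hIoc.mono fun ε hε => ?_
      have hεne : ε ≠ 0 := ne_of_gt hε.1
      have h2 : Qf ε * ε ^ (MLo - mLo).toNat = E ε / ε ^ mLo := by
        rw [← zpow_natCast ε, Int.toNat_of_nonneg (by omega : (0:ℤ) ≤ MLo - mLo)]
        exact scale_back (E ε) ε hεne MLo mLo
      rw [h2, hPfdef]; simp only
      exact (div_le_div_iff_of_pos_right (zpow_pos hε.1 mLo)).mpr (hord ε hε).2
    have hrhs : Tendsto (fun ε => Qf ε * ε ^ (MLo - mLo).toNat) F (nhds 0) := by
      have h1 := hQlim.mul (hpowlim (MLo - mLo).toNat)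
      rwa [zero_pow (by omega : (MLo - mLo).toNat ≠ 0), mul_zero] at h1
    have : b mLo ≤ 0 := le_of_tendsto_of_tendsto hPlim hrhs hle
    linarith
  -- analytic quotient
  set f : ℝ → ℝ := fun x => p x / q x with hfdef
  have hpa : AnalyticAt ℝ p 0 := Finset.analyticAt_fun_sum _ fun j _ =>
    analyticAt_const.mul ((analyticAt_id).pow j)
  have hqa : AnalyticAt ℝ q 0 := Finset.analyticAt_fun_sum _ fun j _ =>
    analyticAt_const.mul ((analyticAt_id).pow j)
  have hfa : AnalyticAt ℝ f 0 := hpa.div hqa (by rw [hq0]; exact hBpiv)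
  obtain ⟨ps, hps⟩ := hfa
  set N : ℕ := min db dB with hNdef
  have hN' : (N : ℤ) = min (mHi - mLo) (MHi - MLo) := by
    rw [hNdef, Nat.cast_min, hdb', hdB']
  set nLo : ℤ := mLo - MLo with hnLodef
  set nHi : ℤ := min (mHi - MLo) (MHi - 2 * MLo + mLo) with hnHidef
  have hnHi : nHi = nLo + N := by omega
  set S : ℝ → ℝ := fun x => ∑ k ∈ Finset.range (N + 1), ps.coeff k * x ^ k with hSdef
  have hSpartial : ∀ x : ℝ, ps.partialSum (N + 1) x = S x := by
    intro x
    rw [hSdef]; simp only [FormalMultilinearSeries.partialSum]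
    refine Finset.sum_congr rfl fun k _ => ?_
    rw [FormalMultilinearSeries.apply_eq_pow_smul_coeff, smul_eq_mul, mul_comm]
  have hlitt : (fun y : ℝ => f y - S y) =o[F] fun y => y ^ N := by
    have hbig := hps.isBigO_sub_partialSum_pow (N + 1)
    have h1 : (fun y : ℝ => f y - S y) =O[F] fun y => ‖y‖ ^ (N + 1) := by
      refine ((hbig.mono nhdsWithin_le_nhds).congr' ?_ EventuallyEq.rfl)
      exact Eventually.of_forall fun y => by
        show f (0 + y) - ps.partialSum (N + 1) y = f y - S y
        rw [zero_add, hSpartial]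
    refine h1.trans_isLittleO ?_
    rw [Asymptotics.isLittleO_iff_tendsto' (hpos.mono fun y hy h =>
      absurd h (pow_ne_zero _ (ne_of_gt hy)))]
    have hid : Tendsto (fun y : ℝ => y) F (nhds 0) :=
      tendsto_id.mono_right nhdsWithin_le_nhds
    refine hid.congr' (hpos.mono fun y hy => ?_)
    show y = ‖y‖ ^ (N + 1) / y ^ N
    rw [Real.norm_eq_abs, abs_of_pos hy, pow_succ, mul_comm (y ^ N) y,
      mul_div_assoc, div_self (pow_ne_zero _ (ne_of_gt hy)), mul_one]
  have hT1 : Tendsto (fun ε => (f ε - S ε) / ε ^ N) F (nhds 0) :=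
    hlitt.tendsto_div_nhds_zero
  have hqneF : ∀ᶠ ε in F, q ε ≠ 0 := hqlim.eventually_ne hBpiv
  have hQneF : ∀ᶠ ε in F, Qf ε ≠ 0 := hQposF.mono fun ε hε => ne_of_gt hε
  have hrbN' : Tendsto (fun ε => rb ε / ε ^ N) F (nhds 0) := by
    have h1 := hrbN.mul (hpowlim (db - N))
    rw [zero_mul] at h1
    refine h1.congr' (hpos.mono fun ε hε => ?_)
    exact div_pow_shift _ _ (ne_of_gt hε) (by omega)
  have hrBN' : Tendsto (fun ε => rB ε / ε ^ N) F (nhds 0) := by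
    have h1 := hrBN.mul (hpowlim (dB - N))
    rw [zero_mul] at h1
    refine h1.congr' (hpos.mono fun ε hε => ?_)
    exact div_pow_shift _ _ (ne_of_gt hε) (by omega)
  have hT2 : Tendsto (fun ε => (Pf ε / Qf ε - f ε) / ε ^ N) F (nhds 0) := by
    have hnum : Tendsto (fun ε => (rb ε / ε ^ N) * q ε - p ε * (rB ε / ε ^ N)) F
        (nhds (0 * B MLo - b mLo * 0)) := (hrbN'.mul hqlim).sub (hplim.mul hrBN')
    have hden : Tendsto (fun ε => Qf ε * q ε) F (nhds (B MLo * B MLo)) := hQlim.mul hqlim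
    have h1 := hnum.div hden (mul_ne_zero hBpiv hBpiv)
    rw [show (0 * B MLo - b mLo * 0) / (B MLo * B MLo) = 0 by ring] at h1
    refine h1.congr' ?_
    filter_upwards [hPeF, hQeF, hqneF, hQneF, hpos] with ε h1 h2 h3 h4 h5
    exact (quot_err (Pf ε) (Qf ε) (p ε) (q ε) (rb ε) (rB ε) (ε ^ N) h1 h2 h4 h3
      (pow_ne_zero _ (ne_of_gt h5))).symm
  have hT3 : Tendsto (fun ε => (Pf ε / Qf ε - S ε) / ε ^ N) F (nhds 0) := by
    have h1 := hT2.add hT1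
    rw [add_zero] at h1
    refine h1.congr fun ε => ?_
    rw [← add_div, sub_add_sub_cancel]
  -- assemble
  set c : ℤ → ℝ := fun l => ps.coeff (l - nLo).toNat with hcdef
  have hc0 : c nLo = b mLo / B MLo := by
    rw [hcdef]; simp only [sub_self, Int.toNat_zero]
    have h1 : ps.coeff 0 = f 0 := hps.coeff_zero 1
    rw [h1, hfdef]; simp only
    rw [hp0, hq0]
  refine ⟨hMm, by omega, c, fun ε => e ε / E ε - ∑ l ∈ Finset.Icc nLo nHi, c l * ε ^ l,
    ⟨fun ε _ => by ring, ?_⟩, hc0, by rw [hc0]; exact div_pos hbpos hBpos⟩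
  refine hT3.congr' ?_
  filter_upwards [hIoc] with ε hε
  have hεpos := hε.1
  have hεne : ε ≠ 0 := ne_of_gt hεpos
  have hEne : E ε ≠ 0 := ne_of_gt (hE0 ε hε)
  have h1 : e ε / E ε = (Pf ε / Qf ε) * ε ^ nLo :=
    quot_scale (e ε) (E ε) ε hεne hEne mLo MLo
  have h2 : ∑ l ∈ Finset.Icc nLo nHi, c l * ε ^ l = ε ^ nLo * S ε := by
    rw [sum_Icc_zpow_eq nLo nHi (by omega) c ε hεne]
    congr 1
    rw [show (nHi - nLo).toNat = N by omega, hSdef]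
    refine Finset.sum_congr rfl fun j _ => ?_
    congr 1
    rw [hcdef]; simp only
    congr 1
    omega
  have h3 : ε ^ nHi = ε ^ nLo * ε ^ N := by
    rw [← zpow_natCast ε N, ← zpow_add₀ hεne, hnHi]
  rw [h1, h2, h3,
    show Pf ε / Qf ε * ε ^ nLo - ε ^ nLo * S ε = ε ^ nLo * (Pf ε / Qf ε - S ε) by ring,
    mul_div_mul_left _ _ (zpow_ne_zero _ hεne)]
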